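/- Let X be a metric space and let μ, ν be finite Borel measures on X. Then sup over all Borel sets A ⊆ X of |μ(A) − ν(A)| equals the sup over all closed bounded sets A ⊆ X of |μ(A) − ν(A)|, and also equals the sup over all open bounded sets B ⊆ X of |μ(B) − ν(B)|. -/

import Mathlib

open MeasureTheory Filter Topology Bornology Metric Set ENNReal

private lemma real_le_of_forall_pos_le_add {a b : ℝ} (h : ∀ ε : ℝ, 0 < ε → a ≤ b + ε) :
    a ≤ b := by
  by_contra hc
  push_neg at hc
  have := h ((a - b) / 2) (by linarith)
  linarith

/-- Inner approximation by closed bounded sets. -/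
private lemma approx_closed13 {X : Type*} [MetricSpace X] [MeasurableSpace X] [BorelSpace X]
    (ρ : Measure X) [IsFiniteMeasure ρ] {s : Set X} (hs : MeasurableSet s)
    {ε : ℝ≥0∞} (hε : ε ≠ 0) :
    ∃ F, F ⊆ s ∧ IsClosed F ∧ IsBounded F ∧ ρ (s \ F) < ε := by
  rcases isEmpty_or_nonempty X with h | ⟨⟨x0⟩⟩
  · refine ⟨∅, empty_subset _, isClosed_empty, isBounded_empty, ?_⟩
    have : s = (∅ : Set X) := Set.eq_empty_of_isEmpty s
    simp [this, pos_iff_ne_zero.mpr hε]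
  obtain ⟨F, hFs, hFc, hF⟩ := hs.exists_isClosed_diff_lt (measure_ne_top ρ s)
    (ε := ε / 2) (by simp [hε])
  -- shrink F to a bounded set
  have hmeas : ∀ n : ℕ, NullMeasurableSet (F \ closedBall x0 n) ρ :=
    fun n => (hFc.measurableSet.diff measurableSet_closedBall).nullMeasurableSet
  have hanti : Antitone (fun n : ℕ => F \ closedBall x0 n) := by
    intro m n hmn
    exact diff_subset_diff_right (closedBall_subset_closedBall (by exact_mod_cast hmn))
  have hiInter : (⋂ n : ℕ, F \ closedBall x0 n) = ∅ := by
    rw [eq_empty_iff_forall_notMem]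
    intro x hx
    obtain ⟨n, hn⟩ := exists_nat_ge (dist x x0)
    exact (mem_iInter.mp hx n).2 (mem_closedBall.mpr hn)
  have htd : Tendsto (fun n : ℕ => ρ (F \ closedBall x0 n)) atTop (𝓝 0) := by
    have := tendsto_measure_iInter_atTop hmeas hanti ⟨0, measure_ne_top ρ _⟩
    rwa [hiInter, measure_empty] at this
  have : ∀ᶠ n : ℕ in atTop, ρ (F \ closedBall x0 n) < ε / 2 :=
    htd.eventually_lt_const (by simp [hε])
  obtain ⟨n, hn⟩ := this.exists
  refine ⟨F ∩ closedBall x0 n, inter_subset_left.trans hFs, hFc.inter isClosed_closedBall,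
    isBounded_closedBall.subset inter_subset_right, ?_⟩
  have hsub : s \ (F ∩ closedBall x0 n) ⊆ (s \ F) ∪ (F \ closedBall x0 n) := by
    intro x hx
    rcases hx with ⟨hxs, hxn⟩
    by_cases hxF : x ∈ F
    · right; exact ⟨hxF, fun hb => hxn ⟨hxF, hb⟩⟩
    · left; exact ⟨hxs, hxF⟩
  calc ρ (s \ (F ∩ closedBall x0 n)) ≤ ρ ((s \ F) ∪ (F \ closedBall x0 n)) := measure_mono hsub
    _ ≤ ρ (s \ F) + ρ (F \ closedBall x0 n) := measure_union_le _ _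
    _ < ε / 2 + ε / 2 := ENNReal.add_lt_add hF hn
    _ = ε := ENNReal.add_halves ε

/-- Outer approximation of closed bounded sets by open bounded sets. -/
private lemma approx_open13 {X : Type*} [MetricSpace X] [MeasurableSpace X] [BorelSpace X]
    (ρ : Measure X) [IsFiniteMeasure ρ] {F : Set X} (hFc : IsClosed F) (hFb : IsBounded F)
    {ε : ℝ≥0∞} (hε : ε ≠ 0) :
    ∃ U, F ⊆ U ∧ IsOpen U ∧ IsBounded U ∧ ρ (U \ F) < ε := by
  rcases isEmpty_or_nonempty X with h | ⟨⟨x0⟩⟩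
  · refine ⟨∅, ?_, isOpen_empty, isBounded_empty, ?_⟩
    · rw [Set.eq_empty_of_isEmpty F]
    · simp [pos_iff_ne_zero.mpr hε]
  obtain ⟨U, hFU, hUo, hU⟩ := F.exists_isOpen_lt_add (measure_ne_top ρ F) hε
  obtain ⟨r, hr⟩ := hFb.subset_ball x0
  refine ⟨U ∩ ball x0 r, subset_inter hFU hr, hUo.inter isOpen_ball,
    isBounded_ball.subset inter_subset_right, ?_⟩
  calc ρ ((U ∩ ball x0 r) \ F) ≤ ρ (U \ F) :=
        measure_mono (diff_subset_diff_left inter_subset_left)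
    _ < ε := measure_diff_lt_of_lt_add hFc.nullMeasurableSet hFU (measure_ne_top ρ F) hU

/-- Splitting estimate. -/
private lemma split13 {X : Type*} [MetricSpace X] [MeasurableSpace X] [BorelSpace X]
    (μ ν : Measure X) [IsFiniteMeasure μ] [IsFiniteMeasure ν] {F s : Set X}
    (hF : MeasurableSet F) (hFs : F ⊆ s) :
    |(|(μ s).toReal - (ν s).toReal| - |(μ F).toReal - (ν F).toReal|)| ≤
      (μ (s \ F)).toReal + (ν (s \ F)).toReal := by
  have hμe : (μ s).toReal = (μ F).toReal + (μ (s \ F)).toReal := by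
    rw [← ENNReal.toReal_add (measure_ne_top _ _) (measure_ne_top _ _),
      measure_add_diff hF.nullMeasurableSet, union_eq_self_of_subset_left hFs]
  have hνe : (ν s).toReal = (ν F).toReal + (ν (s \ F)).toReal := by
    rw [← ENNReal.toReal_add (measure_ne_top _ _) (measure_ne_top _ _),
      measure_add_diff hF.nullMeasurableSet, union_eq_self_of_subset_left hFs]
  have h1 : |(|(μ s).toReal - (ν s).toReal| - |(μ F).toReal - (ν F).toReal|)| ≤
      |((μ s).toReal - (ν s).toReal) - ((μ F).toReal - (ν F).toReal)| :=
    abs_abs_sub_abs_le_abs_sub _ _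
  have h2 : ((μ s).toReal - (ν s).toReal) - ((μ F).toReal - (ν F).toReal) =
      (μ (s \ F)).toReal - (ν (s \ F)).toReal := by rw [hμe, hνe]; ring
  rw [h2] at h1
  refine h1.trans (abs_le.mpr ⟨?_, ?_⟩) <;>
    nlinarith [ENNReal.toReal_nonneg (a := μ (s \ F)), ENNReal.toReal_nonneg (a := ν (s \ F))]

theorem stmt13 {X : Type*} [MetricSpace X] [MeasurableSpace X] [BorelSpace X]
    (μ ν : Measure X) (hμ : IsFiniteMeasure μ) (hν : IsFiniteMeasure ν) :
    (⨆ A : {s : Set X // MeasurableSet s}, |(μ (A : Set X)).toReal - (ν (A : Set X)).toReal|) =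
      (⨆ A : {s : Set X // IsClosed s ∧ Bornology.IsBounded s},
        |(μ (A : Set X)).toReal - (ν (A : Set X)).toReal|) ∧
    (⨆ A : {s : Set X // MeasurableSet s}, |(μ (A : Set X)).toReal - (ν (A : Set X)).toReal|) =
      (⨆ B : {s : Set X // IsOpen s ∧ Bornology.IsBounded s},
        |(μ (B : Set X)).toReal - (ν (B : Set X)).toReal|) := by
  haveI := hμ; haveI := hν
  set f : Set X → ℝ := fun s => |(μ s).toReal - (ν s).toReal| with hf
  have hbound : ∀ s : Set X, f s ≤ (μ univ).toReal + (ν univ).toReal := by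
    intro s
    have h1 : (μ s).toReal ≤ (μ univ).toReal :=
      ENNReal.toReal_mono (measure_ne_top _ _) (measure_mono (subset_univ s))
    have h2 : (ν s).toReal ≤ (ν univ).toReal :=
      ENNReal.toReal_mono (measure_ne_top _ _) (measure_mono (subset_univ s))
    have := abs_le.mpr (show -((μ univ).toReal + (ν univ).toReal) ≤
        (μ s).toReal - (ν s).toReal ∧ (μ s).toReal - (ν s).toReal ≤
        (μ univ).toReal + (ν univ).toReal from
      ⟨by nlinarith [ENNReal.toReal_nonneg (a := μ s), ENNReal.toReal_nonneg (a := ν s)],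
       by nlinarith [ENNReal.toReal_nonneg (a := μ s), ENNReal.toReal_nonneg (a := ν s)]⟩)
    exact this
  haveI : Nonempty {s : Set X // MeasurableSet s} := ⟨⟨∅, MeasurableSet.empty⟩⟩
  haveI : Nonempty {s : Set X // IsClosed s ∧ Bornology.IsBounded s} :=
    ⟨⟨∅, isClosed_empty, isBounded_empty⟩⟩
  haveI : Nonempty {s : Set X // IsOpen s ∧ Bornology.IsBounded s} :=
    ⟨⟨∅, isOpen_empty, isBounded_empty⟩⟩
  have bddc : BddAbove (Set.range fun A : {s : Set X // IsClosed s ∧ Bornology.IsBounded s} =>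
      f (A : Set X)) := by
    refine ⟨(μ univ).toReal + (ν univ).toReal, ?_⟩
    rintro x ⟨A, rfl⟩; exact hbound _
  have bddo : BddAbove (Set.range fun A : {s : Set X // IsOpen s ∧ Bornology.IsBounded s} =>
      f (A : Set X)) := by
    refine ⟨(μ univ).toReal + (ν univ).toReal, ?_⟩
    rintro x ⟨A, rfl⟩; exact hbound _
  have bddb : BddAbove (Set.range fun A : {s : Set X // MeasurableSet s} => f (A : Set X)) := by
    refine ⟨(μ univ).toReal + (ν univ).toReal, ?_⟩
    rintro x ⟨A, rfl⟩; exact hbound _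
  -- trivial directions
  have hcb : (⨆ A : {s : Set X // IsClosed s ∧ Bornology.IsBounded s}, f (A : Set X)) ≤
      ⨆ A : {s : Set X // MeasurableSet s}, f (A : Set X) := by
    refine ciSup_le fun A => ?_
    exact le_ciSup bddb ⟨(A : Set X), A.2.1.measurableSet⟩
  have hob : (⨆ A : {s : Set X // IsOpen s ∧ Bornology.IsBounded s}, f (A : Set X)) ≤
      ⨆ A : {s : Set X // MeasurableSet s}, f (A : Set X) := by
    refine ciSup_le fun A => ?_
    exact le_ciSup bddb ⟨(A : Set X), A.2.1.measurableSet⟩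
  -- nontrivial directions
  have herr : ∀ (s : Set X), MeasurableSet s → ∀ ε : ℝ, 0 < ε →
      ∃ F, F ⊆ s ∧ IsClosed F ∧ IsBounded F ∧ f s ≤ f F + ε := by
    intro s hs ε hε
    obtain ⟨F, hFs, hFc, hFb, hFlt⟩ := approx_closed13 (μ + ν) hs
      (ε := ENNReal.ofReal (ε / 2)) ((ENNReal.ofReal_pos.mpr (by linarith)).ne')
    have hμd : (μ (s \ F)).toReal < ε / 2 := by
      refine ENNReal.toReal_lt_of_lt_ofReal (lt_of_le_of_lt ?_ hFlt)
      exact le_trans (le_add_right le_rfl) (le_of_eq (Measure.add_apply μ ν _).symm)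
    have hνd : (ν (s \ F)).toReal < ε / 2 := by
      refine ENNReal.toReal_lt_of_lt_ofReal (lt_of_le_of_lt ?_ hFlt)
      exact le_trans (le_add_left le_rfl) (le_of_eq (Measure.add_apply μ ν _).symm)
    have hsplit := split13 μ ν hFc.measurableSet hFs
    have := abs_le.mp hsplit
    exact ⟨F, hFs, hFc, hFb, by simp only [hf]; linarith [this.2]⟩
  have herro : ∀ (F : Set X), IsClosed F → IsBounded F → ∀ ε : ℝ, 0 < ε →
      ∃ U, IsOpen U ∧ IsBounded U ∧ f F ≤ f U + ε := by
    intro F hFc hFb ε hε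
    obtain ⟨U, hFU, hUo, hUb, hUlt⟩ := approx_open13 (μ + ν) hFc hFb
      (ε := ENNReal.ofReal (ε / 2)) ((ENNReal.ofReal_pos.mpr (by linarith)).ne')
    have hμd : (μ (U \ F)).toReal < ε / 2 := by
      refine ENNReal.toReal_lt_of_lt_ofReal (lt_of_le_of_lt ?_ hUlt)
      exact le_trans (le_add_right le_rfl) (le_of_eq (Measure.add_apply μ ν _).symm)
    have hνd : (ν (U \ F)).toReal < ε / 2 := by
      refine ENNReal.toReal_lt_of_lt_ofReal (lt_of_le_of_lt ?_ hUlt)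
      exact le_trans (le_add_left le_rfl) (le_of_eq (Measure.add_apply μ ν _).symm)
    have hsplit := split13 μ ν hFc.measurableSet hFU
    have := abs_le.mp hsplit
    exact ⟨U, hUo, hUb, by simp only [hf]; linarith [this.1]⟩
  have hbc : (⨆ A : {s : Set X // MeasurableSet s}, f (A : Set X)) ≤
      ⨆ A : {s : Set X // IsClosed s ∧ Bornology.IsBounded s}, f (A : Set X) := by
    refine ciSup_le fun A => real_le_of_forall_pos_le_add fun ε hε => ?_
    obtain ⟨F, _, hFc, hFb, hle⟩ := herr A A.2 ε hε
    exact hle.trans (add_le_add (le_ciSup bddc ⟨F, hFc, hFb⟩) le_rfl)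
  have hbo : (⨆ A : {s : Set X // MeasurableSet s}, f (A : Set X)) ≤
      ⨆ A : {s : Set X // IsOpen s ∧ Bornology.IsBounded s}, f (A : Set X) := by
    refine ciSup_le fun A => real_le_of_forall_pos_le_add fun ε hε => ?_
    obtain ⟨F, _, hFc, hFb, hle⟩ := herr A A.2 (ε / 2) (by positivity)
    obtain ⟨U, hUo, hUb, hle'⟩ := herro F hFc hFb (ε / 2) (by positivity)
    have : f U ≤ ⨆ A : {s : Set X // IsOpen s ∧ Bornology.IsBounded s}, f (A : Set X) :=
      le_ciSup bddo ⟨U, hUo, hUb⟩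
    linarith
  exact ⟨le_antisymm hbc hcb, le_antisymm hbo hob⟩
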